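/- Let X ⊆ ℝ^n, f continuous, ρ > 0. Then x* is a global minimizer of x ↦ f(x) + ρ‖x‖₀ over X if and only if there exists y* ∈ ℝ^n such that (x*, y*) is a global minimizer of (x,y) ↦ f(x) + ρ(n - ∑_i y_i) over {(x,y) : x ∈ X, x ∘ y = 0, y ≤ e}. -/
import Mathlib


open Finset

noncomputable def norm0 {n : ℕ} (x : Fin n → ℝ) : ℝ :=
  ((Finset.univ.filter fun i => x i ≠ 0).card : ℝ)

lemma sum_le_aux {n : ℕ} (x y : Fin n → ℝ) (hxy : ∀ i, x i * y i = 0)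
    (hy : ∀ i, y i ≤ 1) : ∑ i, y i ≤ (n : ℝ) - norm0 x := by
  have h1 : ∑ i, y i ≤ ∑ i, (if x i = 0 then (1:ℝ) else 0) := by
    apply Finset.sum_le_sum
    intro i _
    by_cases h : x i = 0
    · simpa [h] using hy i
    · have := hxy i
      have : y i = 0 := by
        rcases mul_eq_zero.mp this with h' | h'
        · exact absurd h' h
        · exact h'
      simp [h, this]
  have h2 : ∑ i, (if x i = 0 then (1:ℝ) else 0) = (n : ℝ) - norm0 x := by
    rw [Finset.sum_boole]
    simp only [norm0]
    have hc : (Finset.univ.filter fun i => x i = 0).card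
        + (Finset.univ.filter fun i => ¬ x i = 0).card = n := by
      simpa using Finset.card_filter_add_card_filter_not
        (s := (Finset.univ : Finset (Fin n))) (p := fun i => x i = 0)
    have : ((Finset.univ.filter fun i => x i = 0).card : ℝ)
        + ((Finset.univ.filter fun i => ¬ x i = 0).card : ℝ) = (n : ℝ) := by
      exact_mod_cast hc
    simp only [ne_eq]
    linarith [this]
  linarith [h1, h2.le, h2.ge]

theorem stmt9 {n : ℕ} (X : Set (Fin n → ℝ)) (f : (Fin n → ℝ) → ℝ)
    (hf : Continuous f) (ρ : ℝ) (hρ : 0 < ρ) (xstar : Fin n → ℝ) :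
    (xstar ∈ X ∧ ∀ x ∈ X, f xstar + ρ * norm0 xstar ≤ f x + ρ * norm0 x) ↔
    (∃ ystar : Fin n → ℝ,
      (xstar ∈ X ∧ (∀ i, xstar i * ystar i = 0) ∧ (∀ i, ystar i ≤ 1)) ∧
      ∀ (x y : Fin n → ℝ), x ∈ X → (∀ i, x i * y i = 0) → (∀ i, y i ≤ 1) →
        f xstar + ρ * ((n : ℝ) - ∑ i, ystar i) ≤ f x + ρ * ((n : ℝ) - ∑ i, y i)) := by
  have key : ∀ x : Fin n → ℝ, ∑ i, (fun i => if x i = 0 then (1:ℝ) else 0) i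
      = (n : ℝ) - norm0 x := by
    intro x
    have := sum_le_aux x (fun i => if x i = 0 then (1:ℝ) else 0)
      (fun i => by by_cases h : x i = 0 <;> simp [h])
      (fun i => by by_cases h : x i = 0 <;> simp [h])
    -- prove equality directly instead
    rw [Finset.sum_boole]
    simp only [norm0]
    have hc : (Finset.univ.filter fun i => x i = 0).card
        + (Finset.univ.filter fun i => ¬ x i = 0).card = n := by
      simpa using Finset.card_filter_add_card_filter_not
        (s := (Finset.univ : Finset (Fin n))) (p := fun i => x i = 0)
    have hcast : ((Finset.univ.filter fun i => x i = 0).card : ℝ)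
        + ((Finset.univ.filter fun i => ¬ x i = 0).card : ℝ) = (n : ℝ) := by
      exact_mod_cast hc
    simp only [ne_eq]
    linarith
  constructor
  · rintro ⟨hxX, hopt⟩
    refine ⟨fun i => if xstar i = 0 then 1 else 0,
      ⟨hxX, fun i => by by_cases h : xstar i = 0 <;> simp [h],
        fun i => by by_cases h : xstar i = 0 <;> simp [h]⟩, ?_⟩
    intro x y hxX' hxy hy
    have h1 : (n : ℝ) - ∑ i, (fun i => if xstar i = 0 then (1:ℝ) else 0) i
        = norm0 xstar := by rw [key]; ring
    have h2 : norm0 x ≤ (n : ℝ) - ∑ i, y i := by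
      have := sum_le_aux x y hxy hy; linarith
    calc f xstar + ρ * ((n:ℝ) - ∑ i, (fun i => if xstar i = 0 then (1:ℝ) else 0) i)
        = f xstar + ρ * norm0 xstar := by rw [h1]
      _ ≤ f x + ρ * norm0 x := hopt x hxX'
      _ ≤ f x + ρ * ((n:ℝ) - ∑ i, y i) := by nlinarith
  · rintro ⟨ystar, ⟨hxX, hxy, hy⟩, hopt⟩
    refine ⟨hxX, fun x hx => ?_⟩
    have h1 : norm0 xstar ≤ (n : ℝ) - ∑ i, ystar i := by
      have := sum_le_aux xstar ystar hxy hy; linarith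
    have h2 := hopt x (fun i => if x i = 0 then 1 else 0) hx
      (fun i => by by_cases h : x i = 0 <;> simp [h])
      (fun i => by by_cases h : x i = 0 <;> simp [h])
    have h3 : (n : ℝ) - ∑ i, (fun i => if x i = 0 then (1:ℝ) else 0) i
        = norm0 x := by rw [key]; ring
    rw [h3] at h2
    nlinarith
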